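/- For δ > 0, the squared Huber loss f = h², where h(x) = x²/2 for |x| ≤ δ and h(x) = δ(|x| − δ/2) for |x| > δ, satisfies for all x, y ∈ ℝ: f(x) ≥ f(y) + f'(y)(x−y) + (1/2)c(y)(x−y)², where c(y) = y² if |y| ≤ δ and c(y) = δ² if |y| > δ. -/
import Mathlib

set_option maxHeartbeats 1000000 in
theorem stmt_19 (δ : ℝ) (hδ : 0 < δ) :
    ∀ x y : ℝ,
      (if |y| ≤ δ then y ^ 2 / 2 else δ * (|y| - δ / 2)) ^ 2
          + (if |y| ≤ δ then y ^ 3 else 2 * δ ^ 2 * (|y| - δ / 2) * Real.sign y) * (x - y)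
          + (1 / 2) * (if |y| ≤ δ then y ^ 2 else δ ^ 2) * (x - y) ^ 2
        ≤ (if |x| ≤ δ then x ^ 2 / 2 else δ * (|x| - δ / 2)) ^ 2 := by
  intro x y
  have hx1 : x ≤ |x| := le_abs_self x
  have hx2 : -x ≤ |x| := neg_le_abs x
  have hy1 : y ≤ |y| := le_abs_self y
  have hy2 : -y ≤ |y| := neg_le_abs y
  have hd2 : (0:ℝ) ≤ δ ^ 2 := sq_nonneg δ
  by_cases hy : |y| ≤ δ <;> by_cases hx : |x| ≤ δ <;> simp only [hy, hx, if_true, if_false]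
  · nlinarith [sq_nonneg (x^2 - y^2)]
  · push_neg at hx
    have hax : |x| ^ 2 = x ^ 2 := sq_abs x
    have hy2' : y ^ 2 ≤ δ ^ 2 := by nlinarith
    have hx2' : δ ^ 2 < x ^ 2 := by
      nlinarith [mul_pos (sub_pos.2 hx) (by positivity : (0:ℝ) < |x| + δ)]
    have h1 : 0 ≤ (δ^2 - y^2) * (2*x^2 - δ^2 - y^2) := by nlinarith
    nlinarith [mul_nonneg hd2 (sq_nonneg (|x| - δ))]
  · push_neg at hy
    have hy0 : y ≠ 0 := by intro h; rw [h, abs_zero] at hy; linarith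
    rcases lt_or_gt_of_ne hy0 with h | h
    · rw [Real.sign_of_neg h, abs_of_neg h]
      have hyd : δ < -y := by rwa [abs_of_neg h] at hy
      have h1 : 0 ≤ (-y - δ) * (-y + δ + 2*x) := by nlinarith
      nlinarith [mul_nonneg hd2 h1, sq_nonneg (x^2 - δ^2)]
    · rw [Real.sign_of_pos h, abs_of_pos h]
      have hyd : δ < y := by rwa [abs_of_pos h] at hy
      have h1 : 0 ≤ (y - δ) * (y + δ - 2*x) := by nlinarith
      nlinarith [mul_nonneg hd2 h1, sq_nonneg (x^2 - δ^2)]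
  · push_neg at hy hx
    have hy0 : y ≠ 0 := by intro h; rw [h, abs_zero] at hy; linarith
    rcases lt_or_gt_of_ne hy0 with h | h
    · rw [Real.sign_of_neg h, abs_of_neg h]
      have hyd : δ < -y := by rwa [abs_of_neg h] at hy
      rcases le_or_gt 0 x with hxs | hxs
      · rw [abs_of_nonneg hxs]
        have hxd : δ < x := by rwa [abs_of_nonneg hxs] at hx
        have h1 : 0 ≤ (-y - δ) * (2*x - y + δ) := by nlinarith
        nlinarith [mul_nonneg hd2 h1, mul_nonneg hd2 (sq_nonneg (x - δ))]
      · rw [abs_of_neg hxs]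
        nlinarith [mul_nonneg hd2 (sq_nonneg (x - y))]
    · rw [Real.sign_of_pos h, abs_of_pos h]
      have hyd : δ < y := by rwa [abs_of_pos h] at hy
      rcases le_or_gt 0 x with hxs | hxs
      · rw [abs_of_nonneg hxs]
        nlinarith [mul_nonneg hd2 (sq_nonneg (x - y))]
      · rw [abs_of_neg hxs]
        have hxd : δ < -x := by rwa [abs_of_neg hxs] at hx
        have h1 : 0 ≤ (y - δ) * (y + δ - 2*x) := by nlinarith
        have key : (y - δ/2)^2 + 2*(y - δ/2)*(x - y) + (1/2)*(x - y)^2 ≤ (-x - δ/2)^2 := by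
          nlinarith [sq_nonneg (x + δ)]
        have h2 := mul_le_mul_of_nonneg_left key hd2
        ring_nf at h2 ⊢
        linarith
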